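/- Let (X, X') be an exchangeable pair of random variables taking values in a separable metric space 𝒳, let F : 𝒳 × 𝒳 → ℝ be square-integrable and antisymmetric, and let f : 𝒳 → ℝ be square-integrable with E(F(X,X') | X) = f(X) a.s. Define Δ(X) := (1/2) E(|(f(X) - f(X')) F(X,X')| | X). Assume E(e^{θ f(X)} |F(X,X')|) < ∞ for all θ ∈ ℝ, and suppose there exist nonnegative constants B and C such that Δ(X) ≤ B f(X) + C almost surely. Then for all t ≥ 0, P(f(X) ≤ -t) ≤ exp(-t² / (2C)). -/

import Mathlib

open MeasureTheory

private lemma exp_le_one_add_abs_mul' (u : ℝ) : Real.exp u ≤ 1 + |u| * Real.exp u := by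
  rcases le_or_gt u 0 with h | h
  · have := Real.exp_le_one_iff.mpr h
    nlinarith [abs_nonneg u, Real.exp_pos u]
  · rw [abs_of_pos h]
    have h1 : (1 - u) * Real.exp u ≤ Real.exp (-u) * Real.exp u :=
      mul_le_mul_of_nonneg_right (by linarith [Real.add_one_le_exp (-u)]) (Real.exp_pos u).le
    have h2 : Real.exp (-u) * Real.exp u = 1 := by rw [← Real.exp_add]; simp
    nlinarith

private lemma aux_tanh' {x : ℝ} (hx : 0 ≤ x) : (1 - x) * Real.exp x ≤ (1 + x) * Real.exp (-x) := by
  set h : ℝ → ℝ := fun y => (1 + y) * Real.exp (-y) - (1 - y) * Real.exp y with hh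
  have hderiv : ∀ y : ℝ, HasDerivAt h (y * (Real.exp y - Real.exp (-y))) y := by
    intro y
    have h1 : HasDerivAt (fun y : ℝ => (1 + y) * Real.exp (-y))
        (1 * Real.exp (-y) + (1 + y) * (Real.exp (-y) * (-1))) y :=
      ((hasDerivAt_id y).const_add 1).mul (((hasDerivAt_id y).neg).exp)
    have h2 : HasDerivAt (fun y : ℝ => (1 - y) * Real.exp y)
        ((-1) * Real.exp y + (1 - y) * Real.exp y) y := by
      have : HasDerivAt (fun y : ℝ => (1 - y)) (-1) y := by
        exact (hasDerivAt_id' y).const_sub 1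
      exact this.mul (Real.hasDerivAt_exp y)
    have := h1.sub h2
    exact this.congr_deriv (by ring)
  have hmono : MonotoneOn h (Set.Ici (0:ℝ)) := by
    apply monotoneOn_of_deriv_nonneg (convex_Ici 0)
    · exact fun y _ => ((hderiv y).differentiableAt.continuousAt).continuousWithinAt
    · exact fun y _ => ((hderiv y).differentiableAt).differentiableWithinAt
    · intro y hy
      rw [interior_Ici] at hy
      rw [(hderiv y).deriv]
      have h1 : Real.exp (-y) ≤ Real.exp y := Real.exp_le_exp.mpr (by linarith [hy.out])
      have h2 := le_of_lt hy.out
      nlinarith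
  have h0 : h 0 ≤ h x := hmono (by simp) (by simpa using hx) hx
  simp only [hh] at h0
  simp at h0
  linarith

private lemma abs_exp_sub_exp_le' (p q : ℝ) :
    |Real.exp p - Real.exp q| ≤ |p - q| * (Real.exp p + Real.exp q) / 2 := by
  wlog hpq : q ≤ p generalizing p q
  · have := this q p (by linarith)
    rw [abs_sub_comm (Real.exp q), abs_sub_comm q p, add_comm (Real.exp q)] at this
    exact this
  set x := (p - q) / 2 with hxdef
  have hx : 0 ≤ x := by rw [hxdef]; linarith
  have key := aux_tanh' hx
  have h3 := mul_le_mul_of_nonneg_right key (Real.exp_pos ((p+q)/2)).le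
  have e1 : Real.exp x * Real.exp ((p+q)/2) = Real.exp p := by
    rw [← Real.exp_add]; congr 1; rw [hxdef]; ring
  have e2 : Real.exp (-x) * Real.exp ((p+q)/2) = Real.exp q := by
    rw [← Real.exp_add]; congr 1; rw [hxdef]; ring
  rw [mul_assoc, mul_assoc, e1, e2] at h3
  have hpq2 : p - q = 2 * x := by rw [hxdef]; ring
  rw [abs_of_nonneg (sub_nonneg.2 (Real.exp_le_exp.mpr hpq)),
      abs_of_nonneg (by linarith : (0:ℝ) ≤ p - q), hpq2]
  nlinarith

theorem lower_tail_of_exchangeable_pair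
    {Ω 𝒳 : Type*} [MeasurableSpace Ω]
    [MetricSpace 𝒳] [TopologicalSpace.SeparableSpace 𝒳]
    [MeasurableSpace 𝒳] [BorelSpace 𝒳]
    (μ : Measure Ω) [IsProbabilityMeasure μ]
    (X X' : Ω → 𝒳) (hX : Measurable X) (hX' : Measurable X')
    (hexch : Measure.map (fun ω => (X ω, X' ω)) μ = Measure.map (fun ω => (X' ω, X ω)) μ)
    (F : 𝒳 → 𝒳 → ℝ) (hF : Measurable (Function.uncurry F))
    (hFL2 : MemLp (fun ω => F (X ω) (X' ω)) 2 μ)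
    (hFanti : ∀ᵐ ω ∂μ, F (X ω) (X' ω) = - F (X' ω) (X ω))
    (f : 𝒳 → ℝ) (hf : Measurable f)
    (hfL2 : MemLp (fun ω => f (X ω)) 2 μ)
    (hcond : μ[(fun ω => F (X ω) (X' ω)) | MeasurableSpace.comap X inferInstance]
      =ᵐ[μ] fun ω => f (X ω))
    (hprod : Integrable (fun ω => (f (X ω) - f (X' ω)) * F (X ω) (X' ω)) μ)
    (hmgf : ∀ θ : ℝ, Integrable (fun ω => Real.exp (θ * f (X ω)) * |F (X ω) (X' ω)|) μ)
    (B C : ℝ) (hB : 0 ≤ B) (hC : 0 ≤ C)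
    (hΔ : ∀ᵐ ω ∂μ,
      (1 / 2) * (μ[(fun ω' => |(f (X ω') - f (X' ω')) * F (X ω') (X' ω')|)
          | MeasurableSpace.comap X inferInstance]) ω
        ≤ B * f (X ω) + C)
    (t : ℝ) (ht : 0 ≤ t) :
    (μ {ω | f (X ω) ≤ -t}).toReal ≤ Real.exp (-t ^ 2 / (2 * C)) := by
  classical
  have hprob_le_one : (μ {ω | f (X ω) ≤ -t}).toReal ≤ 1 := by
    have h1 : (μ {ω | f (X ω) ≤ -t}).toReal ≤ (μ Set.univ).toReal :=
      ENNReal.toReal_mono (measure_ne_top μ _) (measure_mono (Set.subset_univ _))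
    simpa using h1
  by_cases hC0 : C = 0
  · have : Real.exp (-t ^ 2 / (2 * C)) = 1 := by
      rw [hC0, mul_zero, div_zero, Real.exp_zero]
    rw [this]; exact hprob_le_one
  by_cases ht0 : t = 0
  · have : Real.exp (-t ^ 2 / (2 * C)) = 1 := by
      rw [ht0]; norm_num
    rw [this]; exact hprob_le_one
  have hCpos : 0 < C := lt_of_le_of_ne hC (Ne.symm hC0)
  have htpos : 0 < t := lt_of_le_of_ne ht (Ne.symm ht0)
  have hm : (MeasurableSpace.comap X (inferInstance : MeasurableSpace 𝒳)) ≤ (inferInstance : MeasurableSpace Ω) := hX.comap_le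
  have hXm : Measurable[(MeasurableSpace.comap X (inferInstance : MeasurableSpace 𝒳))] X := fun s hs => ⟨s, hs, rfl⟩
  haveI : SigmaFinite (μ.trim hm) := by
    haveI : IsFiniteMeasure (μ.trim hm) := isFiniteMeasure_trim hm
    infer_instance
  have hfXm : Measurable[(MeasurableSpace.comap X (inferInstance : MeasurableSpace 𝒳))] fun ω => f (X ω) := hf.comp hXm
  have hfX : Measurable fun ω => f (X ω) := hf.comp hX
  have hGmeas : Measurable fun ω => F (X ω) (X' ω) := hF.comp (hX.prodMk hX')
  have hGint : Integrable (fun ω => F (X ω) (X' ω)) μ := hFL2.integrable one_le_two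
  have hPmeas : Measurable fun ω => (f (X ω) - f (X' ω)) * F (X ω) (X' ω) :=
    (hfX.sub (hf.comp hX')).mul hGmeas
  have hPabs : Integrable (fun ω => |(f (X ω) - f (X' ω)) * F (X ω) (X' ω)|) μ := hprod.abs
  have hgm : ∀ θ : ℝ, StronglyMeasurable[(MeasurableSpace.comap X (inferInstance : MeasurableSpace 𝒳))] fun ω => Real.exp (θ * f (X ω)) :=
    fun θ => (Real.measurable_exp.comp (hfXm.const_mul θ)).stronglyMeasurable
  have hgmeas : ∀ θ : ℝ, Measurable fun ω => Real.exp (θ * f (X ω)) :=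
    fun θ => Real.measurable_exp.comp (hfX.const_mul θ)
  -- |f(X)| is bounded by the conditional expectation of |F|
  have habs_f_le : ∀ᵐ ω ∂μ, |f (X ω)| ≤ (μ[(fun ω => |F (X ω) (X' ω)|)|(MeasurableSpace.comap X (inferInstance : MeasurableSpace 𝒳))]) ω := by
    have h1 : μ[(fun ω => F (X ω) (X' ω))|(MeasurableSpace.comap X (inferInstance : MeasurableSpace 𝒳))] ≤ᵐ[μ] μ[(fun ω => |F (X ω) (X' ω)|)|(MeasurableSpace.comap X (inferInstance : MeasurableSpace 𝒳))] :=
      condExp_mono hGint hGint.abs (ae_of_all _ fun ω => le_abs_self _)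
    have h2 : μ[(fun ω => -F (X ω) (X' ω))|(MeasurableSpace.comap X (inferInstance : MeasurableSpace 𝒳))] ≤ᵐ[μ] μ[(fun ω => |F (X ω) (X' ω)|)|(MeasurableSpace.comap X (inferInstance : MeasurableSpace 𝒳))] :=
      condExp_mono hGint.neg hGint.abs (ae_of_all _ fun ω => neg_le_abs _)
    have h3 : μ[(fun ω => -F (X ω) (X' ω))|(MeasurableSpace.comap X (inferInstance : MeasurableSpace 𝒳))]
        =ᵐ[μ] fun ω => -(μ[(fun ω => F (X ω) (X' ω))|(MeasurableSpace.comap X (inferInstance : MeasurableSpace 𝒳))]) ω := by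
      exact condExp_neg (m := (MeasurableSpace.comap X (inferInstance : MeasurableSpace 𝒳))) (μ := μ) (fun ω => F (X ω) (X' ω))
    filter_upwards [h1, h2, h3, hcond] with ω e1 e2 e3 e4
    rw [e3] at e2
    rw [← e4]
    exact abs_le.mpr ⟨by linarith, e1⟩
  have hint_exp_absf : ∀ θ : ℝ,
      Integrable (fun ω => Real.exp (θ * f (X ω)) * |f (X ω)|) μ := by
    intro θ
    have hpull : μ[((fun ω => Real.exp (θ * f (X ω))) * (fun ω => |F (X ω) (X' ω)|))|(MeasurableSpace.comap X (inferInstance : MeasurableSpace 𝒳))]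
        =ᵐ[μ] (fun ω => Real.exp (θ * f (X ω))) * μ[(fun ω => |F (X ω) (X' ω)|)|(MeasurableSpace.comap X (inferInstance : MeasurableSpace 𝒳))] :=
      condExp_mul_of_stronglyMeasurable_left (hgm θ) (hmgf θ) hGint.abs
    refine Integrable.mono' (integrable_condExp (m := (MeasurableSpace.comap X (inferInstance : MeasurableSpace 𝒳)))
      (f := (fun ω => Real.exp (θ * f (X ω))) * (fun ω => |F (X ω) (X' ω)|)))
      ((hgmeas θ).mul hfX.abs).aestronglyMeasurable ?_
    filter_upwards [hpull, habs_f_le] with ω h1 h2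
    rw [Real.norm_eq_abs, abs_of_nonneg (by positivity), h1]
    simp only [Pi.mul_apply]
    exact mul_le_mul_of_nonneg_left h2 (Real.exp_pos _).le
  have hint_exp : ∀ θ : ℝ, Integrable (fun ω => Real.exp (θ * f (X ω))) μ := by
    intro θ
    refine Integrable.mono' ((integrable_const (1:ℝ)).add ((hint_exp_absf θ).const_mul |θ|))
      (hgmeas θ).aestronglyMeasurable (ae_of_all _ fun ω => ?_)
    rw [Real.norm_eq_abs, abs_of_nonneg (Real.exp_pos _).le]
    calc Real.exp (θ * f (X ω)) ≤ 1 + |θ * f (X ω)| * Real.exp (θ * f (X ω)) :=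
          exp_le_one_add_abs_mul' _
      _ = 1 + |θ| * (Real.exp (θ * f (X ω)) * |f (X ω)|) := by rw [abs_mul]; ring
  have hint_exp_f : ∀ θ : ℝ, Integrable (fun ω => Real.exp (θ * f (X ω)) * f (X ω)) μ := by
    intro θ
    refine Integrable.mono' (hint_exp_absf θ) ((hgmeas θ).mul hfX).aestronglyMeasurable
      (ae_of_all _ fun ω => ?_)
    rw [Real.norm_eq_abs, abs_mul, abs_of_nonneg (Real.exp_pos _).le]
  have hint_exp_G : ∀ θ : ℝ,
      Integrable (fun ω => Real.exp (θ * f (X ω)) * F (X ω) (X' ω)) μ := by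
    intro θ
    refine Integrable.mono' (hmgf θ) ((hgmeas θ).mul hGmeas).aestronglyMeasurable
      (ae_of_all _ fun ω => ?_)
    rw [Real.norm_eq_abs, abs_mul, abs_of_nonneg (Real.exp_pos _).le]
  set M : ℝ → ℝ := fun θ => ∫ ω, Real.exp (θ * f (X ω)) ∂μ with hMdef
  set D : ℝ → ℝ := fun θ => ∫ ω, Real.exp (θ * f (X ω)) * f (X ω) ∂μ with hDdef
  have hM_nonneg : ∀ θ, 0 ≤ M θ :=
    fun θ => integral_nonneg fun ω => (Real.exp_pos _).le
  -- Step 2 : D θ = ∫ exp(θ f X) F(X,X')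
  have hDG : ∀ θ : ℝ, D θ = ∫ ω, Real.exp (θ * f (X ω)) * F (X ω) (X' ω) ∂μ := by
    intro θ
    have hpull : μ[((fun ω => Real.exp (θ * f (X ω))) * (fun ω => F (X ω) (X' ω)))|(MeasurableSpace.comap X (inferInstance : MeasurableSpace 𝒳))]
        =ᵐ[μ] (fun ω => Real.exp (θ * f (X ω))) * μ[(fun ω => F (X ω) (X' ω))|(MeasurableSpace.comap X (inferInstance : MeasurableSpace 𝒳))] :=
      condExp_mul_of_stronglyMeasurable_left (hgm θ) (hint_exp_G θ) hGint
    have e1 : (fun ω => Real.exp (θ * f (X ω)) * f (X ω))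
        =ᵐ[μ] μ[((fun ω => Real.exp (θ * f (X ω))) * (fun ω => F (X ω) (X' ω)))|(MeasurableSpace.comap X (inferInstance : MeasurableSpace 𝒳))] := by
      filter_upwards [hpull, hcond] with ω h1 h2
      rw [h1]
      simp only [Pi.mul_apply]
      rw [h2]
    calc D θ = ∫ ω, (μ[((fun ω => Real.exp (θ * f (X ω))) * (fun ω => F (X ω) (X' ω)))|(MeasurableSpace.comap X (inferInstance : MeasurableSpace 𝒳))]) ω ∂μ :=
          integral_congr_ae e1
      _ = ∫ ω, Real.exp (θ * f (X ω)) * F (X ω) (X' ω) ∂μ := integral_condExp hm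
  -- swap machinery
  have hswap_eq : ∀ H : 𝒳 × 𝒳 → ℝ, Measurable H →
      ∫ ω, H (X ω, X' ω) ∂μ = ∫ ω, H (X' ω, X ω) ∂μ := by
    intro H hH
    rw [← integral_map (hX.prodMk hX').aemeasurable hH.aestronglyMeasurable, hexch,
      integral_map (hX'.prodMk hX).aemeasurable hH.aestronglyMeasurable]
  have hswap_int : ∀ H : 𝒳 × 𝒳 → ℝ, Measurable H →
      Integrable (fun ω => H (X' ω, X ω)) μ → Integrable (fun ω => H (X ω, X' ω)) μ := by
    intro H hH h
    have h2 : Integrable H (Measure.map (fun ω => (X' ω, X ω)) μ) :=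
      (integrable_map_measure hH.aestronglyMeasurable (hX'.prodMk hX).aemeasurable).mpr h
    rw [← hexch] at h2
    exact (integrable_map_measure hH.aestronglyMeasurable (hX.prodMk hX').aemeasurable).mp h2
  have hFanti' : ∀ᵐ ω ∂μ, F (X' ω) (X ω) = - F (X ω) (X' ω) :=
    hFanti.mono fun ω h => by rw [h]; ring
  -- integrability of F(X,X')·exp(θ f(X'))
  have hint_q : ∀ θ : ℝ, Integrable (fun ω => F (X ω) (X' ω) * Real.exp (θ * f (X' ω))) μ := by
    intro θ
    have hH : Measurable fun p : 𝒳 × 𝒳 => F p.1 p.2 * Real.exp (θ * f p.2) :=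
      hF.mul (((hf.comp measurable_snd).const_mul θ).exp)
    apply hswap_int _ hH
    have he : (fun ω => -(Real.exp (θ * f (X ω)) * F (X ω) (X' ω)))
        =ᵐ[μ] fun ω => F (X' ω) (X ω) * Real.exp (θ * f (X ω)) := by
      filter_upwards [hFanti'] with ω h
      rw [h]; ring
    exact ((hint_exp_G θ).neg.congr he)
  have hq_eq : ∀ θ : ℝ, ∫ ω, F (X ω) (X' ω) * Real.exp (θ * f (X' ω)) ∂μ
      = - ∫ ω, Real.exp (θ * f (X ω)) * F (X ω) (X' ω) ∂μ := by
    intro θ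
    have hH : Measurable fun p : 𝒳 × 𝒳 => F p.1 p.2 * Real.exp (θ * f p.2) :=
      hF.mul (((hf.comp measurable_snd).const_mul θ).exp)
    calc ∫ ω, F (X ω) (X' ω) * Real.exp (θ * f (X' ω)) ∂μ
        = ∫ ω, F (X' ω) (X ω) * Real.exp (θ * f (X ω)) ∂μ := hswap_eq _ hH
      _ = ∫ ω, -(Real.exp (θ * f (X ω)) * F (X ω) (X' ω)) ∂μ :=
          integral_congr_ae (by filter_upwards [hFanti'] with ω h; rw [h]; ring)
      _ = - ∫ ω, Real.exp (θ * f (X ω)) * F (X ω) (X' ω) ∂μ := integral_neg _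
  -- conditional expectation of |ΔF| facts
  have hcP_nonneg : ∀ᵐ ω ∂μ,
      0 ≤ (μ[(fun ω' => |(f (X ω') - f (X' ω')) * F (X ω') (X' ω')|)|(MeasurableSpace.comap X (inferInstance : MeasurableSpace 𝒳))]) ω :=
    condExp_nonneg (ae_of_all _ fun ω => abs_nonneg _)
  have hcP_le : ∀ᵐ ω ∂μ,
      (μ[(fun ω' => |(f (X ω') - f (X' ω')) * F (X ω') (X' ω')|)|(MeasurableSpace.comap X (inferInstance : MeasurableSpace 𝒳))]) ω
        ≤ 2 * (B * f (X ω) + C) := by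
    filter_upwards [hΔ] with ω h; linarith
  have hint_RHS : ∀ θ : ℝ,
      Integrable (fun ω => Real.exp (θ * f (X ω)) * (2 * (B * f (X ω) + C))) μ := by
    intro θ
    have h := ((hint_exp_f θ).const_mul (2*B)).add ((hint_exp θ).const_mul (2*C))
    refine h.congr (ae_of_all _ fun ω => ?_)
    simp only [Pi.add_apply]
    ring
  have hRHS_eq : ∀ θ : ℝ, ∫ ω, Real.exp (θ * f (X ω)) * (2 * (B * f (X ω) + C)) ∂μ
      = 2 * (B * D θ + C * M θ) := by
    intro θ
    have he : (fun ω => Real.exp (θ * f (X ω)) * (2 * (B * f (X ω) + C)))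
        = fun ω => (2*B) * (Real.exp (θ * f (X ω)) * f (X ω)) + (2*C) * Real.exp (θ * f (X ω)) := by
      funext ω; ring
    rw [he, integral_add ((hint_exp_f θ).const_mul (2*B)) ((hint_exp θ).const_mul (2*C)),
      integral_const_mul, integral_const_mul]
    simp only [hMdef, hDdef]
    ring
  -- truncated exp integrability
  have hmulint : ∀ (θ : ℝ) (n : ℕ), Integrable
      (fun ω => min (Real.exp (θ * f (X ω))) n * |(f (X ω) - f (X' ω)) * F (X ω) (X' ω)|) μ := by
    intro θ n
    refine Integrable.mono' (hPabs.const_mul (n:ℝ))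
      (((hgmeas θ).min measurable_const).mul hPmeas.abs).aestronglyMeasurable
      (ae_of_all _ fun ω => ?_)
    rw [Real.norm_eq_abs, abs_of_nonneg
      (mul_nonneg (le_min (Real.exp_pos _).le (Nat.cast_nonneg n)) (abs_nonneg _))]
    exact mul_le_mul_of_nonneg_right (min_le_right _ _) (abs_nonneg _)
  -- the key truncated bound
  have hkeyn : ∀ (θ : ℝ) (n : ℕ),
      ∫ ω, min (Real.exp (θ * f (X ω))) n * |(f (X ω) - f (X' ω)) * F (X ω) (X' ω)| ∂μ
        ≤ ∫ ω, Real.exp (θ * f (X ω)) * (2 * (B * f (X ω) + C)) ∂μ := by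
    intro θ n
    have hgn_meas : StronglyMeasurable[(MeasurableSpace.comap X (inferInstance : MeasurableSpace 𝒳))] fun ω => min (Real.exp (θ * f (X ω))) (n:ℝ) :=
      Measurable.stronglyMeasurable
        (Measurable.min (Real.measurable_exp.comp (hfXm.const_mul θ)) measurable_const)
    have hgn_bdd : ∀ᵐ ω ∂μ, ‖min (Real.exp (θ * f (X ω))) (n:ℝ)‖ ≤ (n:ℝ) :=
      ae_of_all _ fun ω => by
        rw [Real.norm_eq_abs, abs_of_nonneg (le_min (Real.exp_pos _).le (Nat.cast_nonneg n))]
        exact min_le_right _ _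
    have hpull := condExp_stronglyMeasurable_mul_of_bound hm hgn_meas hPabs (n:ℝ) hgn_bdd
    have hcongr_int : Integrable (fun ω => min (Real.exp (θ * f (X ω))) n *
        (μ[(fun ω' => |(f (X ω') - f (X' ω')) * F (X ω') (X' ω')|)|(MeasurableSpace.comap X (inferInstance : MeasurableSpace 𝒳))]) ω) μ :=
      integrable_condExp.congr hpull
    calc ∫ ω, min (Real.exp (θ * f (X ω))) n * |(f (X ω) - f (X' ω)) * F (X ω) (X' ω)| ∂μ
        = ∫ ω, (μ[((fun ω => min (Real.exp (θ * f (X ω))) (n:ℝ)) *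
            (fun ω' => |(f (X ω') - f (X' ω')) * F (X ω') (X' ω')|))|(MeasurableSpace.comap X (inferInstance : MeasurableSpace 𝒳))]) ω ∂μ :=
          (integral_condExp hm).symm
      _ = ∫ ω, min (Real.exp (θ * f (X ω))) n *
            (μ[(fun ω' => |(f (X ω') - f (X' ω')) * F (X ω') (X' ω')|)|(MeasurableSpace.comap X (inferInstance : MeasurableSpace 𝒳))]) ω ∂μ :=
          integral_congr_ae hpull
      _ ≤ ∫ ω, Real.exp (θ * f (X ω)) * (2 * (B * f (X ω) + C)) ∂μ := by
          refine integral_mono_ae hcongr_int (hint_RHS θ) ?_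
          filter_upwards [hcP_nonneg, hcP_le] with ω h0 h2
          exact le_trans
            (mul_le_mul_of_nonneg_right (min_le_left _ _) h0)
            (mul_le_mul_of_nonneg_left h2 (Real.exp_pos _).le)
  -- integrability of exp(θ f X)·|ΔF| via monotone convergence
  have hint_gP : ∀ θ : ℝ, Integrable
      (fun ω => Real.exp (θ * f (X ω)) * |(f (X ω) - f (X' ω)) * F (X ω) (X' ω)|) μ := by
    intro θ
    have hmono_seq : Monotone (fun n : ℕ => fun ω =>
        ENNReal.ofReal (min (Real.exp (θ * f (X ω))) n * |(f (X ω) - f (X' ω)) * F (X ω) (X' ω)|)) := by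
      intro i j hij
      intro ω
      exact ENNReal.ofReal_le_ofReal (mul_le_mul_of_nonneg_right
        (min_le_min le_rfl (Nat.cast_le.2 hij)) (abs_nonneg _))
    have hsup_eq : ∀ ω, (⨆ n : ℕ, ENNReal.ofReal
        (min (Real.exp (θ * f (X ω))) n * |(f (X ω) - f (X' ω)) * F (X ω) (X' ω)|))
          = ENNReal.ofReal (Real.exp (θ * f (X ω)) * |(f (X ω) - f (X' ω)) * F (X ω) (X' ω)|) := by
      intro ω
      apply le_antisymm
      · exact iSup_le fun n => ENNReal.ofReal_le_ofReal
          (mul_le_mul_of_nonneg_right (min_le_left _ _) (abs_nonneg _))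
      · obtain ⟨n, hn⟩ := exists_nat_ge (Real.exp (θ * f (X ω)))
        exact le_iSup_of_le n (by rw [min_eq_left hn])
    have hlin : ∫⁻ ω, ENNReal.ofReal
        (Real.exp (θ * f (X ω)) * |(f (X ω) - f (X' ω)) * F (X ω) (X' ω)|) ∂μ < ⊤ := by
      have h1 : ∫⁻ ω, ENNReal.ofReal
          (Real.exp (θ * f (X ω)) * |(f (X ω) - f (X' ω)) * F (X ω) (X' ω)|) ∂μ
            = ⨆ n : ℕ, ∫⁻ ω, ENNReal.ofReal
              (min (Real.exp (θ * f (X ω))) n * |(f (X ω) - f (X' ω)) * F (X ω) (X' ω)|) ∂μ := by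
        rw [← lintegral_iSup (f := fun n : ℕ => fun ω => ENNReal.ofReal
          (min (Real.exp (θ * f (X ω))) n * |(f (X ω) - f (X' ω)) * F (X ω) (X' ω)|))
          (fun n => (((hgmeas θ).min measurable_const).mul hPmeas.abs).ennreal_ofReal) hmono_seq]
        exact lintegral_congr fun ω => (hsup_eq ω).symm
      rw [h1]
      refine lt_of_le_of_lt (iSup_le fun n => ?_)
        (ENNReal.ofReal_lt_top :
          ENNReal.ofReal (∫ ω, Real.exp (θ * f (X ω)) * (2 * (B * f (X ω) + C)) ∂μ) < ⊤)
      rw [← ofReal_integral_eq_lintegral_ofReal (hmulint θ n)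
        (ae_of_all _ fun ω => mul_nonneg (le_min (Real.exp_pos _).le (Nat.cast_nonneg n)) (abs_nonneg _))]
      exact ENNReal.ofReal_le_ofReal (hkeyn θ n)
    refine ⟨((hgmeas θ).mul hPmeas.abs).aestronglyMeasurable, ?_⟩
    rw [hasFiniteIntegral_iff_ofReal
      (ae_of_all _ fun ω => mul_nonneg (Real.exp_pos _).le (abs_nonneg _))]
    exact hlin
  -- the bound ∫ exp(θ f X)·|ΔF| ≤ 2(B D θ + C M θ)
  have hgP_le : ∀ θ : ℝ,
      ∫ ω, Real.exp (θ * f (X ω)) * |(f (X ω) - f (X' ω)) * F (X ω) (X' ω)| ∂μ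
        ≤ 2 * (B * D θ + C * M θ) := by
    intro θ
    have hpull := condExp_mul_of_stronglyMeasurable_left (hgm θ) (hint_gP θ) hPabs
    rw [← hRHS_eq θ]
    calc ∫ ω, Real.exp (θ * f (X ω)) * |(f (X ω) - f (X' ω)) * F (X ω) (X' ω)| ∂μ
        = ∫ ω, (μ[((fun ω => Real.exp (θ * f (X ω))) *
            (fun ω' => |(f (X ω') - f (X' ω')) * F (X ω') (X' ω')|))|(MeasurableSpace.comap X (inferInstance : MeasurableSpace 𝒳))]) ω ∂μ :=
          (integral_condExp hm).symm
      _ = ∫ ω, Real.exp (θ * f (X ω)) *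
            (μ[(fun ω' => |(f (X ω') - f (X' ω')) * F (X ω') (X' ω')|)|(MeasurableSpace.comap X (inferInstance : MeasurableSpace 𝒳))]) ω ∂μ :=
          integral_congr_ae hpull
      _ ≤ ∫ ω, Real.exp (θ * f (X ω)) * (2 * (B * f (X ω) + C)) ∂μ := by
          refine integral_mono_ae (integrable_condExp.congr hpull) (hint_RHS θ) ?_
          filter_upwards [hcP_le] with ω h2
          exact mul_le_mul_of_nonneg_left h2 (Real.exp_pos _).le
  -- swap-weighted versions
  have hint_qP : ∀ θ : ℝ, Integrable
      (fun ω => Real.exp (θ * f (X' ω)) * |(f (X ω) - f (X' ω)) * F (X ω) (X' ω)|) μ := by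
    intro θ
    have hH : Measurable fun p : 𝒳 × 𝒳 => Real.exp (θ * f p.2) * |(f p.1 - f p.2) * F p.1 p.2| :=
      (((hf.comp measurable_snd).const_mul θ).exp).mul
        ((((hf.comp measurable_fst).sub (hf.comp measurable_snd)).mul hF).abs)
    apply hswap_int _ hH
    have he : (fun ω => Real.exp (θ * f (X ω)) * |(f (X ω) - f (X' ω)) * F (X ω) (X' ω)|)
        =ᵐ[μ] fun ω => Real.exp (θ * f (X ω)) * |(f (X' ω) - f (X ω)) * F (X' ω) (X ω)| := by
      filter_upwards [hFanti'] with ω h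
      rw [h]
      congr 1
      rw [abs_mul, abs_mul, abs_neg, abs_sub_comm]
    exact (hint_gP θ).congr he
  have hqP_eq : ∀ θ : ℝ,
      ∫ ω, Real.exp (θ * f (X' ω)) * |(f (X ω) - f (X' ω)) * F (X ω) (X' ω)| ∂μ
        = ∫ ω, Real.exp (θ * f (X ω)) * |(f (X ω) - f (X' ω)) * F (X ω) (X' ω)| ∂μ := by
    intro θ
    have hH : Measurable fun p : 𝒳 × 𝒳 => Real.exp (θ * f p.2) * |(f p.1 - f p.2) * F p.1 p.2| :=
      (((hf.comp measurable_snd).const_mul θ).exp).mul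
        ((((hf.comp measurable_fst).sub (hf.comp measurable_snd)).mul hF).abs)
    calc ∫ ω, Real.exp (θ * f (X' ω)) * |(f (X ω) - f (X' ω)) * F (X ω) (X' ω)| ∂μ
        = ∫ ω, Real.exp (θ * f (X ω)) * |(f (X' ω) - f (X ω)) * F (X' ω) (X ω)| ∂μ :=
          hswap_eq _ hH
      _ = ∫ ω, Real.exp (θ * f (X ω)) * |(f (X ω) - f (X' ω)) * F (X ω) (X' ω)| ∂μ := by
          refine integral_congr_ae ?_
          filter_upwards [hFanti'] with ω h
          rw [h]
          congr 1
          rw [abs_mul, abs_mul, abs_neg, abs_sub_comm]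
  -- main differential inequality
  have hkey : ∀ θ : ℝ, θ ≤ 0 → θ * (B * D θ + C * M θ) ≤ D θ := by
    intro θ hθ
    have hFe : ∫ ω, F (X ω) (X' ω) * Real.exp (θ * f (X ω)) ∂μ = D θ := by
      rw [hDG θ]
      exact integral_congr_ae (ae_of_all _ fun ω => mul_comm _ _)
    have hintFe : Integrable (fun ω => F (X ω) (X' ω) * Real.exp (θ * f (X ω))) μ :=
      (hint_exp_G θ).congr (ae_of_all _ fun ω => mul_comm _ _)
    have hintS : Integrable (fun ω => F (X ω) (X' ω) *
        (Real.exp (θ * f (X ω)) - Real.exp (θ * f (X' ω)))) μ :=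
      (hintFe.sub (hint_q θ)).congr (ae_of_all _ fun ω => by simp only [Pi.sub_apply]; ring)
    have hSval : ∫ ω, F (X ω) (X' ω) * (Real.exp (θ * f (X ω)) - Real.exp (θ * f (X' ω))) ∂μ
        = 2 * D θ := by
      calc ∫ ω, F (X ω) (X' ω) * (Real.exp (θ * f (X ω)) - Real.exp (θ * f (X' ω))) ∂μ
          = ∫ ω, (F (X ω) (X' ω) * Real.exp (θ * f (X ω))
              - F (X ω) (X' ω) * Real.exp (θ * f (X' ω))) ∂μ :=
            integral_congr_ae (ae_of_all _ fun ω => by ring)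
        _ = (∫ ω, F (X ω) (X' ω) * Real.exp (θ * f (X ω)) ∂μ)
              - ∫ ω, F (X ω) (X' ω) * Real.exp (θ * f (X' ω)) ∂μ :=
            integral_sub hintFe (hint_q θ)
        _ = 2 * D θ := by
            rw [hFe, hq_eq θ, ← hDG θ]; ring
    -- pointwise lower bound and integration
    have hintL : Integrable (fun ω => -((|θ|/2) * ((Real.exp (θ * f (X ω)) + Real.exp (θ * f (X' ω)))
        * |(f (X ω) - f (X' ω)) * F (X ω) (X' ω)|))) μ := by
      have h := ((hint_gP θ).add (hint_qP θ)).const_mul (|θ|/2)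
      refine h.neg.congr (ae_of_all _ fun ω => ?_)
      simp only [Pi.neg_apply, Pi.add_apply]
      ring
    have hpt : ∀ ω, -((|θ|/2) * ((Real.exp (θ * f (X ω)) + Real.exp (θ * f (X' ω)))
        * |(f (X ω) - f (X' ω)) * F (X ω) (X' ω)|))
          ≤ F (X ω) (X' ω) * (Real.exp (θ * f (X ω)) - Real.exp (θ * f (X' ω))) := by
      intro ω
      have h1 := abs_exp_sub_exp_le' (θ * f (X ω)) (θ * f (X' ω))
      have h3 : |θ * f (X ω) - θ * f (X' ω)| = |θ| * |f (X ω) - f (X' ω)| := by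
        rw [← mul_sub, abs_mul]
      rw [h3] at h1
      have h5 := mul_le_mul_of_nonneg_left h1 (abs_nonneg (F (X ω) (X' ω)))
      have h6 : |F (X ω) (X' ω) * (Real.exp (θ * f (X ω)) - Real.exp (θ * f (X' ω)))|
          = |F (X ω) (X' ω)| * |Real.exp (θ * f (X ω)) - Real.exp (θ * f (X' ω))| := abs_mul _ _
      have h7 := neg_abs_le (F (X ω) (X' ω) * (Real.exp (θ * f (X ω)) - Real.exp (θ * f (X' ω))))
      have h8 : |(f (X ω) - f (X' ω)) * F (X ω) (X' ω)|
          = |f (X ω) - f (X' ω)| * |F (X ω) (X' ω)| := abs_mul _ _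
      calc -((|θ|/2) * ((Real.exp (θ * f (X ω)) + Real.exp (θ * f (X' ω)))
              * |(f (X ω) - f (X' ω)) * F (X ω) (X' ω)|))
          = -(|F (X ω) (X' ω)| * (|θ| * |f (X ω) - f (X' ω)|
              * (Real.exp (θ * f (X ω)) + Real.exp (θ * f (X' ω))) / 2)) := by rw [h8]; ring
        _ ≤ -(|F (X ω) (X' ω)| * |Real.exp (θ * f (X ω)) - Real.exp (θ * f (X' ω))|) :=
            neg_le_neg h5
        _ = -|F (X ω) (X' ω) * (Real.exp (θ * f (X ω)) - Real.exp (θ * f (X' ω)))| := by rw [h6]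
        _ ≤ F (X ω) (X' ω) * (Real.exp (θ * f (X ω)) - Real.exp (θ * f (X' ω))) := h7
    have hLval : ∫ ω, -((|θ|/2) * ((Real.exp (θ * f (X ω)) + Real.exp (θ * f (X' ω)))
        * |(f (X ω) - f (X' ω)) * F (X ω) (X' ω)|)) ∂μ
          = -(|θ| * ∫ ω, Real.exp (θ * f (X ω)) * |(f (X ω) - f (X' ω)) * F (X ω) (X' ω)| ∂μ) := by
      rw [integral_neg, integral_const_mul]
      have hsplit : ∫ ω, (Real.exp (θ * f (X ω)) + Real.exp (θ * f (X' ω)))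
          * |(f (X ω) - f (X' ω)) * F (X ω) (X' ω)| ∂μ
            = (∫ ω, Real.exp (θ * f (X ω)) * |(f (X ω) - f (X' ω)) * F (X ω) (X' ω)| ∂μ)
              + ∫ ω, Real.exp (θ * f (X' ω)) * |(f (X ω) - f (X' ω)) * F (X ω) (X' ω)| ∂μ := by
        rw [← integral_add (hint_gP θ) (hint_qP θ)]
        exact integral_congr_ae (ae_of_all _ fun ω => by ring)
      rw [hsplit, hqP_eq θ]; ring
    have hS_lower : -(|θ| * ∫ ω, Real.exp (θ * f (X ω)) * |(f (X ω) - f (X' ω)) * F (X ω) (X' ω)| ∂μ)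
        ≤ 2 * D θ := by
      rw [← hSval, ← hLval]
      exact integral_mono_ae hintL hintS (ae_of_all _ hpt)
    have h6 : |θ| * (∫ ω, Real.exp (θ * f (X ω)) * |(f (X ω) - f (X' ω)) * F (X ω) (X' ω)| ∂μ)
        ≤ |θ| * (2 * (B * D θ + C * M θ)) := mul_le_mul_of_nonneg_left (hgP_le θ) (abs_nonneg θ)
    rw [abs_of_nonpos hθ] at hS_lower h6
    linarith
  -- weaker inequality
  have hkey2 : ∀ θ : ℝ, θ ≤ 0 → θ * C * M θ ≤ D θ := by
    intro θ hθ
    rcases le_or_gt 0 (D θ) with h | h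
    · nlinarith [mul_nonneg hC (hM_nonneg θ)]
    · have h8 := hkey θ hθ
      nlinarith [mul_nonneg (mul_nonneg (neg_nonneg.2 hθ) hB) (neg_nonneg.2 h.le)]
  -- differentiability of the mgf
  have hMderiv : ∀ θ₀ : ℝ, HasDerivAt M (D θ₀) θ₀ := by
    intro θ₀
    have h_bound : ∀ᵐ ω ∂μ, ∀ θ ∈ Metric.ball θ₀ 1,
        ‖Real.exp (θ * f (X ω)) * f (X ω)‖
          ≤ Real.exp ((θ₀-1) * f (X ω)) * |f (X ω)| + Real.exp ((θ₀+1) * f (X ω)) * |f (X ω)| := by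
      refine ae_of_all _ fun ω θ hθ => ?_
      have hball : |θ - θ₀| < 1 := by rwa [Metric.mem_ball, Real.dist_eq] at hθ
      obtain ⟨hb1, hb2⟩ := abs_lt.mp hball
      rw [Real.norm_eq_abs, abs_mul, Real.abs_exp]
      rcases le_or_gt 0 (f (X ω)) with hfx | hfx
      · have h9 : θ * f (X ω) ≤ (θ₀+1) * f (X ω) :=
          mul_le_mul_of_nonneg_right (by linarith) hfx
        have h10 := Real.exp_le_exp.mpr h9
        nlinarith [Real.exp_pos ((θ₀-1) * f (X ω)), abs_nonneg (f (X ω))]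
      · have h9 : θ * f (X ω) ≤ (θ₀-1) * f (X ω) :=
          mul_le_mul_of_nonpos_right (by linarith) hfx.le
        have h10 := Real.exp_le_exp.mpr h9
        nlinarith [Real.exp_pos ((θ₀+1) * f (X ω)), abs_nonneg (f (X ω))]
    have hres := hasDerivAt_integral_of_dominated_loc_of_deriv_le (μ := μ)
      (F := fun θ ω => Real.exp (θ * f (X ω)))
      (F' := fun θ ω => Real.exp (θ * f (X ω)) * f (X ω))
      (x₀ := θ₀) (s := Metric.ball θ₀ 1) (Metric.ball_mem_nhds θ₀ one_pos)
      (Filter.Eventually.of_forall fun θ => (hgmeas θ).aestronglyMeasurable)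
      (hint_exp θ₀)
      ((hgmeas θ₀).mul hfX).aestronglyMeasurable
      h_bound
      ((hint_exp_absf (θ₀-1)).add (hint_exp_absf (θ₀+1)))
      (ae_of_all _ fun ω θ _ => (hasDerivAt_mul_const (f (X ω))).exp)
    simp only [hMdef, hDdef]
    exact hres.2
  -- ODE comparison on [θ₀, 0]
  set θ₁ := -t / C with hθ₁def
  have hθ₁neg : θ₁ < 0 := div_neg_of_neg_of_pos (by linarith) hCpos
  have hM0 : M 0 = 1 := by
    simp only [hMdef, zero_mul, Real.exp_zero, integral_const, measure_univ,
      ENNReal.toReal_one, smul_eq_mul, one_mul, mul_one, probReal_univ]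
  have hφderiv : ∀ θ : ℝ, HasDerivAt (fun θ => M θ * Real.exp (-(C/2) * θ^2))
      ((D θ - C * θ * M θ) * Real.exp (-(C/2) * θ^2)) θ := by
    intro θ
    have h1 : HasDerivAt (fun θ : ℝ => -(C/2) * θ^2) (-(C/2) * (2 * θ^1)) θ :=
      (hasDerivAt_pow 2 θ).const_mul (-(C/2))
    have h2 := (hMderiv θ).mul h1.exp
    exact h2.congr_deriv (by simp only [pow_one]; ring)
  have hmono : MonotoneOn (fun θ => M θ * Real.exp (-(C/2) * θ^2)) (Set.Icc θ₁ 0) := by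
    apply monotoneOn_of_deriv_nonneg (convex_Icc _ _)
    · exact fun θ _ => ((hφderiv θ).differentiableAt.continuousAt).continuousWithinAt
    · exact fun θ _ => (hφderiv θ).differentiableAt.differentiableWithinAt
    · intro θ hθmem
      rw [interior_Icc] at hθmem
      rw [(hφderiv θ).deriv]
      have h3 := hkey2 θ hθmem.2.le
      have h4 : 0 ≤ D θ - C * θ * M θ := by linarith [h3]
      exact mul_nonneg h4 (Real.exp_pos _).le
  have hφle : M θ₁ * Real.exp (-(C/2) * θ₁^2) ≤ 1 := by
    have h1 : θ₁ ∈ Set.Icc θ₁ (0:ℝ) := ⟨le_rfl, hθ₁neg.le⟩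
    have h2 : (0:ℝ) ∈ Set.Icc θ₁ (0:ℝ) := ⟨hθ₁neg.le, le_rfl⟩
    have h3 := hmono h1 h2 hθ₁neg.le
    simp only [hM0] at h3
    calc M θ₁ * Real.exp (-(C/2) * θ₁^2) ≤ 1 * Real.exp (-(C/2) * 0^2) := h3
      _ = 1 := by norm_num
  have hMbound : M θ₁ ≤ Real.exp ((C/2) * θ₁^2) := by
    have hmulid : Real.exp (-(C/2) * θ₁^2) * Real.exp ((C/2) * θ₁^2) = 1 := by
      rw [← Real.exp_add]
      norm_num
    nlinarith [hM_nonneg θ₁, Real.exp_pos (-(C/2) * θ₁^2), Real.exp_pos ((C/2) * θ₁^2),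
      mul_le_mul_of_nonneg_right hφle (Real.exp_pos ((C/2) * θ₁^2)).le]
  -- Chernoff bound
  have hmarkov := mul_meas_ge_le_integral_of_nonneg (μ := μ)
    (f := fun ω => Real.exp (θ₁ * f (X ω))) (ae_of_all _ fun ω => (Real.exp_pos _).le)
    (hint_exp θ₁) (Real.exp (t^2/C))
  have hsubset : {ω | f (X ω) ≤ -t} ⊆ {ω | Real.exp (t^2/C) ≤ Real.exp (θ₁ * f (X ω))} := by
    intro ω hω
    simp only [Set.mem_setOf_eq] at hω ⊢
    rw [Real.exp_le_exp]
    have h1 : θ₁ * (-t) ≤ θ₁ * f (X ω) := mul_le_mul_of_nonpos_left hω hθ₁neg.le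
    have h2 : θ₁ * (-t) = t^2/C := by
      rw [hθ₁def]
      field_simp
    linarith
  have hmeas_le : (μ {ω | f (X ω) ≤ -t}).toReal
      ≤ (μ {ω | Real.exp (t^2/C) ≤ Real.exp (θ₁ * f (X ω))}).toReal :=
    ENNReal.toReal_mono (measure_ne_top μ _) (measure_mono hsubset)
  have hMint : ∫ ω, Real.exp (θ₁ * f (X ω)) ∂μ = M θ₁ := by simp only [hMdef]
  rw [hMint] at hmarkov
  have hexpos : 0 < Real.exp (t^2/C) := Real.exp_pos _
  have hfinal : (μ {ω | f (X ω) ≤ -t}).toReal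
      ≤ Real.exp ((C/2) * θ₁^2) / Real.exp (t^2/C) := by
    rw [le_div_iff₀ hexpos]
    calc (μ {ω | f (X ω) ≤ -t}).toReal * Real.exp (t^2/C)
        ≤ (μ {ω | Real.exp (t^2/C) ≤ Real.exp (θ₁ * f (X ω))}).toReal * Real.exp (t^2/C) :=
          mul_le_mul_of_nonneg_right hmeas_le hexpos.le
      _ = Real.exp (t^2/C) * (μ {ω | Real.exp (t^2/C) ≤ Real.exp (θ₁ * f (X ω))}).toReal :=
          mul_comm _ _
      _ ≤ M θ₁ := hmarkov
      _ ≤ Real.exp ((C/2) * θ₁^2) := hMbound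
  calc (μ {ω | f (X ω) ≤ -t}).toReal ≤ Real.exp ((C/2) * θ₁^2) / Real.exp (t^2/C) := hfinal
    _ = Real.exp ((C/2) * θ₁^2 - t^2/C) := by rw [← Real.exp_sub]
    _ = Real.exp (-t ^ 2 / (2 * C)) := by
        congr 1
        rw [hθ₁def]
        field_simp
        ring
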